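/- Let f : F^n → F be in layered canalizing form with r layers of sizes k_1, …, k_r, canalizing depth d, and canalizing input sets S_{i,j}, and suppose the core function P_C is canalizing in the variable x_s with canalizing input set S_s (but P_C is not 1-canalizing). Then the number of transitions changed by deleting x_s satisfies #{x ∈ F^n : f(x_1, …, x_{s−1}, 0, x_{s+1}, …, x_n) ≠ f(x)} ≤ p^{n − d − 1} · (∏_{i=1}^{r} ∏_{j=1}^{k_i} (p − |S_{i,j}|)) · (p − R), where R = |S_s| if 0 ∈ S_s and R = 1 if 0 ∉ S_s. -/

import Mathlib

open Finset

/-- Indicator function of the complement of `S`: `Qt S x = 1` if `x ∉ S`, `0` if `x ∈ S`. -/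
def Qt {F : Type*} [Fintype F] [DecidableEq F] [Zero F] [One F] (S : Finset F) (x : F) : F :=
  if x ∈ S then 0 else 1

/-- `g` actually depends on (is essential in) its `i`-th variable. -/
def EssDependsOn {F : Type*} (n : ℕ) (g : (Fin n → F) → F) (i : Fin n) : Prop :=
  ∃ x y : Fin n → F, (∀ j, j ≠ i → x j = y j) ∧ g x ≠ g y

/-- `g` is canalizing in its `i`-th variable with canalizing input set `S`
(a nonempty proper subset of `F`) and canalizing output `b`. -/
def Canalizing {F : Type*} [Fintype F] [DecidableEq F] (n : ℕ) (g : (Fin n → F) → F)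
    (i : Fin n) (S : Finset F) (b : F) : Prop :=
  S.Nonempty ∧ S ≠ Finset.univ ∧ ∀ x : Fin n → F, x i ∈ S → g x = b

/-- `f` is 1-canalizing in its `i`-th variable with canalizing input set `S`
(a nonempty proper subset of `F`) and canalizing output `b`: `f = b` whenever `x i ∈ S`,
and on `x i ∉ S` the value of `f` is given by a single function of the remaining variables
which is not identically `b`. -/
def OneCanalizing {F : Type*} [Fintype F] [DecidableEq F] (n : ℕ) (f : (Fin n → F) → F)
    (i : Fin n) (S : Finset F) (b : F) : Prop :=
  S.Nonempty ∧ S ≠ Finset.univ ∧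
  (∀ x : Fin n → F, x i ∈ S → f x = b) ∧
  (∀ x y : Fin n → F, x i ∉ S → y i ∉ S → (∀ j, j ≠ i → x j = y j) → f x = f y) ∧
  (∃ x : Fin n → F, x i ∉ S ∧ f x ≠ b)

/-- Nested evaluation `M₁(M₂(⋯(M_r · P + B_r)⋯) + B₂) + B₁`. -/
def nestEval {F : Type*} [Mul F] [Add F] : List (F × F) → F → F
  | [], P => P
  | (m, b) :: t, P => m * nestEval t P + b

/-- Layered canalizing form data for a function of `n` variables with `r ≥ 1` layers:
pairwise disjoint layer blocks, nonempty proper canalizing input sets for the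
layer variables, layer constants `B` with the last one nonzero, and a core function
`P_C` of the remaining variables having no 1-canalizing variables. -/
structure LayeredForm (F : Type*) [Field F] [Fintype F] [DecidableEq F] (n r : ℕ) where
  hr : 0 < r
  layer : Fin r → Finset (Fin n)
  disj : ∀ i j : Fin r, i ≠ j → Disjoint (layer i) (layer j)
  S : Fin n → Finset F
  Sne : ∀ i : Fin r, ∀ v ∈ layer i, (S v).Nonempty
  Spr : ∀ i : Fin r, ∀ v ∈ layer i, S v ≠ Finset.univ
  B : Fin r → F
  Blast : B ⟨r - 1, Nat.sub_lt hr Nat.one_pos⟩ ≠ 0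
  PC : (Fin n → F) → F
  PCvars : ∀ i : Fin r, ∀ v ∈ layer i, ¬ EssDependsOn n PC v
  PCnc : ¬ ∃ (v : Fin n) (S' : Finset F) (b : F), OneCanalizing n PC v S' b

/-- The product `M_i = ∏_{v ∈ L_i} Q̃_{S_v}(x_v)` over the `i`-th layer. -/
def LayeredForm.M {F : Type*} [Field F] [Fintype F] [DecidableEq F] {n r : ℕ}
    (L : LayeredForm F n r) (i : Fin r) (x : Fin n → F) : F :=
  ∏ v ∈ L.layer i, Qt (L.S v) (x v)

/-- The function determined by a layered canalizing form:
`f(x) = M₁(M₂(⋯(M_r · P_C + B_r)⋯) + B₂) + B₁`. -/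
def LayeredForm.eval {F : Type*} [Field F] [Fintype F] [DecidableEq F] {n r : ℕ}
    (L : LayeredForm F n r) (x : Fin n → F) : F :=
  nestEval (List.ofFn fun i => (L.M i x, L.B i)) (L.PC x)

/-- The number of state-space transitions changed when the input `s` of `f`
is replaced by the constant `a` (edge deletion when `a = 0`). -/
def chCount {F : Type*} [Fintype F] [DecidableEq F] {n : ℕ}
    (f : (Fin n → F) → F) (s : Fin n) (a : F) : ℕ :=
  (Finset.univ.filter fun x : Fin n → F => f (Function.update x s a) ≠ f x).card
lemma nestEval_sub {F : Type*} [CommRing F] (l : List (F × F)) (P P' : F) :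
    nestEval l P - nestEval l P' = (l.map Prod.fst).prod * (P - P') := by
  induction l with
  | nil => simp [nestEval]
  | cons h t ih =>
    simp only [nestEval, List.map_cons, List.prod_cons]
    have e : h.1 * nestEval t P + h.2 - (h.1 * nestEval t P' + h.2)
        = h.1 * (nestEval t P - nestEval t P') := by ring
    rw [e, ih]; ring

/-- Edge-deletion bound for a remaining variable `s` in which the core
function `P_C` is canalizing (but `P_C` is not 1-canalizing) with input set `Ss`. -/
theorem stmt12 {F : Type*} [Field F] [Fintype F] [DecidableEq F] {n r : ℕ}
    (f : (Fin n → F) → F) (L : LayeredForm F n r) (hf : f = L.eval)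
    (s : Fin n) (hsrem : ∀ i : Fin r, s ∉ L.layer i)
    (Ss : Finset F) (hcan : ∃ b : F, Canalizing n L.PC s Ss b) :
    chCount f s 0 ≤
      Fintype.card F ^ (n - (∑ i : Fin r, (L.layer i).card) - 1) *
        (∏ i : Fin r, ∏ v ∈ L.layer i, (Fintype.card F - (L.S v).card)) *
        (Fintype.card F - if (0 : F) ∈ Ss then Ss.card else 1) := by
  classical
  obtain ⟨b, _, _, hb⟩ := hcan
  set U : Finset (Fin n) := Finset.univ.biUnion L.layer with hU
  have hsU : s ∉ U := by
    simp only [hU, Finset.mem_biUnion, Finset.mem_univ, true_and, not_exists]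
    exact hsrem
  set T : Finset F := (if (0:F) ∈ Ss then Ss else {0})ᶜ with hT
  set allowed : Fin n → Finset F := fun v =>
    if v ∈ U then (L.S v)ᶜ else if v = s then T else Finset.univ with hallowed
  have key : (Finset.univ.filter fun x : Fin n → F =>
      f (Function.update x s 0) ≠ f x) ⊆ Fintype.piFinset allowed := by
    intro x hx
    simp only [Finset.mem_filter, Finset.mem_univ, true_and] at hx
    have hM : ∀ i, L.M i (Function.update x s 0) = L.M i x := by
      intro i
      unfold LayeredForm.M
      refine Finset.prod_congr rfl fun v hv => ?_
      have : v ≠ s := fun h => hsrem i (h ▸ hv)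
      rw [Function.update_of_ne this]
    have h0 : (∏ i, L.M i x) * (L.PC (Function.update x s 0) - L.PC x) ≠ 0 := by
      intro h
      apply hx
      rw [hf]
      unfold LayeredForm.eval
      have hlist : (List.ofFn fun i => (L.M i (Function.update x s 0), L.B i))
          = List.ofFn fun i => (L.M i x, L.B i) := by
        congr 1; funext i; rw [hM i]
      rw [hlist]
      have hprod : ((List.ofFn fun i => (L.M i x, L.B i)).map Prod.fst).prod
          = ∏ i, L.M i x := by
        rw [List.map_ofFn]
        simp [List.prod_ofFn, Function.comp]
      have := nestEval_sub (List.ofFn fun i => (L.M i x, L.B i))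
        (L.PC (Function.update x s 0)) (L.PC x)
      rw [hprod, h] at this
      exact sub_eq_zero.mp this
    have hprodne : (∏ i, L.M i x) ≠ 0 := left_ne_zero_of_mul h0
    have hPCne : L.PC (Function.update x s 0) ≠ L.PC x :=
      sub_ne_zero.mp (right_ne_zero_of_mul h0)
    rw [Fintype.mem_piFinset]
    intro v
    rw [hallowed]
    by_cases hvU : v ∈ U
    · simp only [hvU, if_true, Finset.mem_compl]
      intro hvS
      obtain ⟨i, -, hvi⟩ := Finset.mem_biUnion.mp hvU
      apply hprodne
      refine Finset.prod_eq_zero (Finset.mem_univ i) ?_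
      unfold LayeredForm.M
      refine Finset.prod_eq_zero hvi ?_
      simp [Qt, hvS]
    · simp only [hvU, if_false]
      by_cases hvs : v = s
      · subst hvs
        simp only [if_true, hT, Finset.mem_compl]
        by_cases h0S : (0:F) ∈ Ss
        · simp only [h0S, if_true]
          intro hxs
          apply hPCne
          rw [hb x hxs, hb (Function.update x v 0) (by simp [h0S])]
        · simp only [h0S, if_false, Finset.mem_singleton]
          intro hxs
          apply hPCne
          rw [← hxs, Function.update_eq_self]
      · simp [hvs]
  have hcard := Finset.card_le_card key
  rw [Fintype.card_piFinset] at hcard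
  unfold chCount
  refine hcard.trans (le_of_eq ?_)
  have hUcard : U.card = ∑ i : Fin r, (L.layer i).card :=
    Finset.card_biUnion fun i _ j _ hij => L.disj i j hij
  have hsplit : (∏ v : Fin n, (allowed v).card)
      = (∏ v ∈ U, (allowed v).card) * ∏ v ∈ Uᶜ, (allowed v).card :=
    (Finset.prod_mul_prod_compl U _).symm
  have hUprod : (∏ v ∈ U, (allowed v).card)
      = ∏ i : Fin r, ∏ v ∈ L.layer i, (Fintype.card F - (L.S v).card) := by
    have : (∏ v ∈ U, (allowed v).card)
        = ∏ v ∈ U, (Fintype.card F - (L.S v).card) := by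
      refine Finset.prod_congr rfl fun v hv => ?_
      simp [hallowed, hv, Finset.card_compl]
    rw [this, hU]
    exact Finset.prod_biUnion fun i _ j _ hij => L.disj i j hij
  have hsUc : s ∈ Uᶜ := Finset.mem_compl.mpr hsU
  have hTcard : T.card = Fintype.card F - (if (0:F) ∈ Ss then Ss.card else 1) := by
    rw [hT, Finset.card_compl]
    by_cases h0S : (0:F) ∈ Ss <;> simp [h0S]
  have hCprod : (∏ v ∈ Uᶜ, (allowed v).card)
      = (Fintype.card F - if (0:F) ∈ Ss then Ss.card else 1) *
        Fintype.card F ^ (n - (∑ i : Fin r, (L.layer i).card) - 1) := by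
    rw [← Finset.mul_prod_erase Uᶜ _ hsUc]
    congr 1
    · simp [hallowed, hsU, hTcard]
    · have hrest : ∀ v ∈ Uᶜ.erase s, (allowed v).card = Fintype.card F := by
        intro v hv
        obtain ⟨hvs, hvU⟩ := Finset.mem_erase.mp hv
        have : v ∉ U := Finset.mem_compl.mp hvU
        simp [hallowed, this, hvs]
      rw [Finset.prod_congr rfl hrest, Finset.prod_const]
      congr 1
      rw [Finset.card_erase_of_mem hsUc, Finset.card_compl, hUcard]
      simp [Fintype.card_fin]
  rw [hsplit, hUprod, hCprod]
  ring
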